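/- For every ε > 0 there exists a constant C > 0 such that for all k₁, k₂ ∈ ℤ with k₁ + k₂ ≠ 0 one has ∑_{k₃ ∈ ℤ, k₃ ≠ 0} (|k₁ + k₂ + k₃| · |k₁ + k₃|) / ((k₃² + (k₁ + k₂ + k₃)²) · (k₃² + (k₁ + k₃)²)) ≤ C · |k₁ + k₂|^{ε − 1}. -/

import Mathlib

open Real

/-- Core convolution bound: for `1 ≤ a`, `1 ≤ b`, `0 < M ≤ a + b`, `0 < s ≤ 1`,
`1/(2ab) ≤ (1/2) * 2^(1-s) * M^(s-1) * (a^(-(1+s)) + b^(-(1+s)))`. -/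
lemma key_ineq {s a b M : ℝ} (hs0 : 0 < s) (hs1 : s ≤ 1)
    (ha : 1 ≤ a) (hb : 1 ≤ b) (hM : 0 < M) (hMab : M ≤ a + b) :
    1 / (2 * a * b) ≤ (1/2) * 2 ^ (1 - s) * M ^ (s - 1) * (a ^ (-(1+s)) + b ^ (-(1+s))) := by
  have ha0 : (0:ℝ) < a := lt_of_lt_of_le one_pos ha
  have hb0 : (0:ℝ) < b := lt_of_lt_of_le one_pos hb
  -- the one-sided bound, assuming a ≤ b
  have main : ∀ a b : ℝ, 0 < a → 0 < b → a ≤ b → M ≤ a + b →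
      1 / (2 * a * b) ≤ (1/2) * 2 ^ (1 - s) * M ^ (s - 1) * a ^ (-(1+s)) := by
    intro a b ha0 hb0 hab hM2
    have hMb : M ≤ 2 * b := by linarith
    -- key: a^s * M^(1-s) ≤ 2^(1-s) * b
    have h1 : a ^ s * M ^ (1 - s) ≤ 2 ^ (1 - s) * b := by
      calc a ^ s * M ^ (1 - s) ≤ b ^ s * (2 * b) ^ (1 - s) := by
            apply mul_le_mul (Real.rpow_le_rpow ha0.le hab hs0.le)
              (Real.rpow_le_rpow hM.le hMb (by linarith))
              (Real.rpow_nonneg hM.le _) (Real.rpow_nonneg hb0.le _)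
        _ = 2 ^ (1 - s) * b := by
            rw [Real.mul_rpow (by norm_num) hb0.le, ← mul_assoc, mul_comm (b ^ s), mul_assoc,
              ← Real.rpow_add hb0]
            norm_num
    -- convert
    rw [div_le_iff₀ (by positivity)]
    have e1 : a ^ (-(1+s)) = a⁻¹ * a ^ (-s) := by
      rw [show -(1+s) = -1 + -s by ring, Real.rpow_add ha0, Real.rpow_neg_one]
    have h2 : (1/2) * 2 ^ (1-s) * M ^ (s-1) * a ^ (-(1+s)) * (2 * a * b)
        = (2 ^ (1-s) * b) * (M ^ (s-1) * a ^ (-s)) := by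
      rw [e1]; field_simp
    have h3 : (1:ℝ) = (a ^ s * M ^ (1-s)) * (M ^ (s-1) * a ^ (-s)) := by
      rw [show (a^s*M^(1-s))*(M^(s-1)*a^(-s)) = (a^s*a^(-s))*(M^(1-s)*M^(s-1)) by ring,
        ← Real.rpow_add ha0, ← Real.rpow_add hM]
      norm_num
    calc (1:ℝ) = (a ^ s * M ^ (1-s)) * (M ^ (s-1) * a ^ (-s)) := h3
      _ ≤ (2 ^ (1-s) * b) * (M ^ (s-1) * a ^ (-s)) :=
          mul_le_mul_of_nonneg_right h1 (by positivity)
      _ = _ := h2.symm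
  rcases le_total a b with hab | hab
  · calc 1 / (2 * a * b) ≤ (1/2) * 2 ^ (1-s) * M ^ (s-1) * a ^ (-(1+s)) :=
        main a b ha0 hb0 hab hMab
      _ ≤ _ := by
        have : (0:ℝ) ≤ b ^ (-(1+s)) := Real.rpow_nonneg hb0.le _
        nlinarith [Real.rpow_nonneg ha0.le (-(1+s)), mul_pos (Real.rpow_pos_of_pos hM 
          (s-1)) (Real.rpow_pos_of_pos two_pos (1-s))]
  · have := main b a hb0 ha0 hab (by linarith)
    calc 1 / (2 * a * b) = 1 / (2 * b * a) := by ring_nf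
      _ ≤ (1/2) * 2 ^ (1-s) * M ^ (s-1) * b ^ (-(1+s)) := this
      _ ≤ _ := by
        have : (0:ℝ) ≤ a ^ (-(1+s)) := Real.rpow_nonneg ha0.le _
        nlinarith [Real.rpow_nonneg hb0.le (-(1+s)), mul_pos (Real.rpow_pos_of_pos hM
          (s-1)) (Real.rpow_pos_of_pos two_pos (1-s))]

/-- Factor bound: `|A||B|/((e²+A²)(e²+B²)) ≤ 1/(2|e||A|)`. -/
lemma term_bound {A B e : ℝ} (he : e ≠ 0) (hA : A ≠ 0) :
    |A| * |B| / ((e ^ 2 + A ^ 2) * (e ^ 2 + B ^ 2)) ≤ 1 / (2 * |e| * |A|) := by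
  have he0 : (0:ℝ) < |e| := abs_pos.mpr he
  have hA0 : (0:ℝ) < |A| := abs_pos.mpr hA
  have hd1 : (0:ℝ) < e ^ 2 + A ^ 2 := by positivity
  have hd2 : (0:ℝ) < e ^ 2 + B ^ 2 := by positivity
  have h1 : |A| / (e ^ 2 + A ^ 2) ≤ 1 / |A| := by
    rw [div_le_div_iff₀ hd1 hA0]
    nlinarith [sq_abs A, sq_nonneg e]
  have h2 : |B| / (e ^ 2 + B ^ 2) ≤ 1 / (2 * |e|) := by
    rw [div_le_div_iff₀ hd2 (by positivity)]
    nlinarith [sq_abs B, sq_abs e, sq_nonneg (|e| - |B|)]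
  calc |A| * |B| / ((e ^ 2 + A ^ 2) * (e ^ 2 + B ^ 2))
      = (|A| / (e ^ 2 + A ^ 2)) * (|B| / (e ^ 2 + B ^ 2)) := (div_mul_div_comm _ _ _ _).symm
    _ ≤ (1 / |A|) * (1 / (2 * |e|)) := by
        apply mul_le_mul h1 h2 (by positivity) (by positivity)
    _ = 1 / (2 * |e| * |A|) := by field_simp

/-- Vertex sum estimate for `V^{tree-8}`:
`∑_{k₃ ≠ 0} |k₁+k₂+k₃| |k₁+k₃| / ((k₃² + (k₁+k₂+k₃)²)(k₃² + (k₁+k₃)²)) ≲ |k₁+k₂|^{ε-1}`. -/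
theorem stmt8 (ε : ℝ) (hε : 0 < ε) :
    ∃ C : ℝ, 0 < C ∧ ∀ k₁ k₂ : ℤ, k₁ + k₂ ≠ 0 →
      ∑' k₃ : ℤ, (if k₃ ≠ 0 then
          ENNReal.ofReal
            ((|(k₁ : ℝ) + (k₂ : ℝ) + (k₃ : ℝ)| * |(k₁ : ℝ) + (k₃ : ℝ)|) /
              (((k₃ : ℝ) ^ 2 + ((k₁ : ℝ) + (k₂ : ℝ) + (k₃ : ℝ)) ^ 2) *
                ((k₃ : ℝ) ^ 2 + ((k₁ : ℝ) + (k₃ : ℝ)) ^ 2)))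
        else 0)
      ≤ ENNReal.ofReal (C * |(k₁ : ℝ) + (k₂ : ℝ)| ^ (ε - 1)) := by
  set s : ℝ := min ε 1 with hs_def
  have hs0 : 0 < s := lt_min hε one_pos
  have hs1 : s ≤ 1 := min_le_right _ _
  have hsε : s ≤ ε := min_le_left _ _
  have hsum : Summable (fun j : ℤ => |(j:ℝ)| ^ (-(1+s))) := by
    have := Real.summable_abs_int_rpow (b := 1 + s) (by linarith)
    exact this.congr (fun j => by norm_num)
  set Z : ℝ := ∑' j : ℤ, |(j:ℝ)| ^ (-(1+s)) with hZ_def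
  have hZnn : ∀ j : ℤ, 0 ≤ |(j:ℝ)| ^ (-(1+s)) := fun j => Real.rpow_nonneg (abs_nonneg _) _
  have hZpos : 0 < Z := by
    refine Summable.tsum_pos hsum hZnn 1 ?_
    simpa using Real.rpow_pos_of_pos one_pos (-(1+s))
  refine ⟨2 ^ (1 - s) * Z, by positivity, fun k₁ k₂ hk => ?_⟩
  set m : ℤ := k₁ + k₂ with hm_def
  have hM1 : (1:ℝ) ≤ |(m:ℝ)| := by
    rw [← Int.cast_abs]
    exact_mod_cast Int.one_le_abs hk
  have hM0 : (0:ℝ) < |(m:ℝ)| := lt_of_lt_of_le one_pos hM1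
  set c : ℝ := (1/2) * 2 ^ (1-s) * |(m:ℝ)| ^ (s-1) with hc_def
  have hc0 : 0 ≤ c := by positivity
  set u : ℤ → ENNReal := fun j => ENNReal.ofReal (|(j:ℝ)| ^ (-(1+s))) with hu_def
  -- pointwise bound
  have hpt : ∀ n : ℤ, (if n ≠ 0 then
      ENNReal.ofReal
        ((|(k₁ : ℝ) + (k₂ : ℝ) + (n : ℝ)| * |(k₁ : ℝ) + (n : ℝ)|) /
          (((n : ℝ) ^ 2 + ((k₁ : ℝ) + (k₂ : ℝ) + (n : ℝ)) ^ 2) *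
            ((n : ℝ) ^ 2 + ((k₁ : ℝ) + (n : ℝ)) ^ 2)))
      else 0) ≤ ENNReal.ofReal c * (u n + u (m + n)) := by
    intro n
    by_cases hn : n = 0
    · simp [hn]
    rw [if_pos hn]
    have key2 : ENNReal.ofReal c * (u n + u (m + n))
        = ENNReal.ofReal (c * (|(n:ℝ)| ^ (-(1+s)) + |((m+n : ℤ):ℝ)| ^ (-(1+s)))) := by
      rw [hu_def, ← ENNReal.ofReal_add (hZnn n) (hZnn (m+n)), ← ENNReal.ofReal_mul hc0]
    rw [key2]
    apply ENNReal.ofReal_le_ofReal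
    by_cases hmn : m + n = 0
    · have hz : (k₁ : ℝ) + (k₂ : ℝ) + (n : ℝ) = 0 := by
        have : ((m + n : ℤ) : ℝ) = 0 := by exact_mod_cast congrArg (Int.cast : ℤ → ℝ) hmn
        push_cast [hm_def] at this ⊢
        linarith [this]
      rw [hz]
      simp only [abs_zero, zero_mul, zero_div]
      positivity
    · -- main case
      have hen : ((n:ℝ)) ≠ 0 := Int.cast_ne_zero.mpr hn
      have hA : (k₁ : ℝ) + (k₂ : ℝ) + (n : ℝ) ≠ 0 := by
        have : ((m + n : ℤ) : ℝ) ≠ 0 := Int.cast_ne_zero.mpr hmn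
        push_cast [hm_def] at this
        intro h; apply this; linarith
      have ha1 : (1:ℝ) ≤ |(n:ℝ)| := by
        rw [← Int.cast_abs]; exact_mod_cast Int.one_le_abs hn
      have hb1 : (1:ℝ) ≤ |((m+n : ℤ):ℝ)| := by
        rw [← Int.cast_abs]; exact_mod_cast Int.one_le_abs hmn
      have hMab : |(m:ℝ)| ≤ |(n:ℝ)| + |((m+n : ℤ):ℝ)| := by
        have : ((m:ℝ)) = ((m+n : ℤ):ℝ) - (n:ℝ) := by push_cast [hm_def]; ring
        rw [this]
        exact le_trans (abs_sub _ _) (by rw [add_comm])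
      have habs : |(k₁ : ℝ) + (k₂ : ℝ) + (n : ℝ)| = |((m+n : ℤ):ℝ)| := by
        congr 1; push_cast [hm_def]; ring
      have hA2 : ((k₁ : ℝ) + (k₂ : ℝ) + (n : ℝ)) ^ 2 = ((m+n : ℤ):ℝ) ^ 2 := by
        push_cast [hm_def]; ring
      calc |(k₁ : ℝ) + (k₂ : ℝ) + (n : ℝ)| * |(k₁ : ℝ) + (n : ℝ)| /
            (((n : ℝ) ^ 2 + ((k₁ : ℝ) + (k₂ : ℝ) + (n : ℝ)) ^ 2) *
              ((n : ℝ) ^ 2 + ((k₁ : ℝ) + (n : ℝ)) ^ 2))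
          ≤ 1 / (2 * |(n:ℝ)| * |(k₁ : ℝ) + (k₂ : ℝ) + (n : ℝ)|) := term_bound hen hA
        _ = 1 / (2 * |(n:ℝ)| * |((m+n : ℤ):ℝ)|) := by rw [habs]
        _ ≤ c * (|(n:ℝ)| ^ (-(1+s)) + |((m+n : ℤ):ℝ)| ^ (-(1+s))) := by
            rw [hc_def]
            have := key_ineq hs0 hs1 ha1 hb1 hM0 hMab
            calc 1 / (2 * |(n:ℝ)| * |((m+n : ℤ):ℝ)|)
                ≤ (1/2) * 2 ^ (1-s) * |(m:ℝ)| ^ (s-1) *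
                  (|(n:ℝ)| ^ (-(1+s)) + |((m+n : ℤ):ℝ)| ^ (-(1+s))) := this
              _ = _ := by ring
  -- sum the bound
  calc _ ≤ ∑' n : ℤ, ENNReal.ofReal c * (u n + u (m + n)) := ENNReal.tsum_le_tsum hpt
    _ = ENNReal.ofReal c * ((∑' n : ℤ, u n) + ∑' n : ℤ, u (m + n)) := by
        rw [ENNReal.tsum_mul_left, ENNReal.tsum_add]
    _ = ENNReal.ofReal c * (ENNReal.ofReal Z + ENNReal.ofReal Z) := by
        rw [show (∑' n : ℤ, u (m + n)) = ∑' n : ℤ, u n from (Equiv.addLeft m).tsum_eq u]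
        rw [hu_def, hZ_def, ENNReal.ofReal_tsum_of_nonneg hZnn hsum]
    _ = ENNReal.ofReal (c * (Z + Z)) := by
        rw [← ENNReal.ofReal_add hZpos.le hZpos.le, ← ENNReal.ofReal_mul hc0]
    _ ≤ ENNReal.ofReal (2 ^ (1 - s) * Z * |(k₁ : ℝ) + (k₂ : ℝ)| ^ (ε - 1)) := by
        apply ENNReal.ofReal_le_ofReal
        have hcast : |(k₁ : ℝ) + (k₂ : ℝ)| = |(m:ℝ)| := by congr 1; push_cast [hm_def]; ring
        rw [hcast, hc_def]
        have hexp : |(m:ℝ)| ^ (s-1) ≤ |(m:ℝ)| ^ (ε-1) :=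
          Real.rpow_le_rpow_of_exponent_le hM1 (by linarith)
        calc (1/2) * 2 ^ (1-s) * |(m:ℝ)| ^ (s-1) * (Z + Z)
            = 2 ^ (1-s) * Z * |(m:ℝ)| ^ (s-1) := by ring
          _ ≤ 2 ^ (1-s) * Z * |(m:ℝ)| ^ (ε-1) := by
              apply mul_le_mul_of_nonneg_left hexp (by positivity)
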